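/- Let M be a nonnegative real-valued function on (unnormalized) two-qubit pure states that is linearly homogeneous (M(λψ⟨ψ|λ̄) = |λ|² M(|ψ⟩⟨ψ|)) and invariant under ψ ↦ (A⊗B)ψ for all A,B ∈ SL(2,ℂ). Then for any invertible 2×2 matrix A₁ with A₁†A₁ ≤ I and Ā₁ = √(I − A₁†A₁), the averaged post-measurement value satisfies M(|ψ⟩⟨ψ|) ≥ M((A₁⊗I)|ψ⟩⟨ψ|(A₁⊗I)†) + M((Ā₁⊗I)|ψ⟩⟨ψ|(Ā₁⊗I)†). -/

import Mathlib

open Matrix ComplexOrder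

/-- Action of `A ⊗ B` on a two-qubit state given by its coefficients. -/
noncomputable def act2 (A B : Matrix (Fin 2) (Fin 2) ℂ)
    (ψ : Fin 2 × Fin 2 → ℂ) : Fin 2 × Fin 2 → ℂ :=
  fun x => ∑ i, ∑ j, A x.1 i * B x.2 j * ψ (i, j)

/-- The (unnormalized) density operator `|ψ⟩⟨ψ|`. -/
noncomputable def outer (ψ : Fin 2 × Fin 2 → ℂ) :
    Matrix (Fin 2 × Fin 2) (Fin 2 × Fin 2) ℂ :=
  Matrix.vecMulVec ψ (star ψ)

/-- The positive semidefinite square root of a positive semidefinite matrix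
(the definition `Matrix.PosSemidef.sqrt` of the older Mathlib, since removed). -/
noncomputable def Matrix.PosSemidef.sqrt {n 𝕜 : Type*} [Fintype n] [DecidableEq n] [RCLike 𝕜]
    {A : Matrix n n 𝕜} (hA : A.PosSemidef) : Matrix n n 𝕜 :=
  hA.1.eigenvectorUnitary.1 * diagonal ((↑) ∘ (√·) ∘ hA.1.eigenvalues) *
  (star hA.1.eigenvectorUnitary : Matrix n n 𝕜)

lemma Matrix.PosSemidef.posSemidef_sqrt {n 𝕜 : Type*} [Fintype n] [DecidableEq n] [RCLike 𝕜]
    {A : Matrix n n 𝕜} (hA : A.PosSemidef) : hA.sqrt.PosSemidef := by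
  unfold Matrix.PosSemidef.sqrt
  have hD : (diagonal ((↑) ∘ (√·) ∘ hA.1.eigenvalues) : Matrix n n 𝕜).PosSemidef := by
    rw [posSemidef_diagonal_iff]
    intro i
    simp [Real.sqrt_nonneg]
  have := hD.mul_mul_conjTranspose_same hA.1.eigenvectorUnitary.1
  simpa [Matrix.star_eq_conjTranspose] using this

lemma Matrix.PosSemidef.sqrt_mul_self {n 𝕜 : Type*} [Fintype n] [DecidableEq n] [RCLike 𝕜]
    {A : Matrix n n 𝕜} (hA : A.PosSemidef) : hA.sqrt * hA.sqrt = A := by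
  unfold Matrix.PosSemidef.sqrt
  have hU : (star hA.1.eigenvectorUnitary : Matrix n n 𝕜) * hA.1.eigenvectorUnitary.1 = 1 :=
    Unitary.star_mul_self_of_mem hA.1.eigenvectorUnitary.2
  have hDD : (diagonal ((↑) ∘ (√·) ∘ hA.1.eigenvalues) : Matrix n n 𝕜) *
      diagonal ((↑) ∘ (√·) ∘ hA.1.eigenvalues) = diagonal (RCLike.ofReal ∘ hA.1.eigenvalues) := by
    rw [diagonal_mul_diagonal]
    congr 1
    funext i
    simp only [Function.comp_apply]
    rw [← RCLike.ofReal_mul, Real.mul_self_sqrt (hA.eigenvalues_nonneg i)]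
  conv_rhs => rw [hA.1.spectral_theorem]
  rw [Unitary.conjStarAlgAut_apply]
  calc _ = (hA.1.eigenvectorUnitary.1 * (diagonal ((↑) ∘ (√·) ∘ hA.1.eigenvalues) *
      ((star hA.1.eigenvectorUnitary : Matrix n n 𝕜) * hA.1.eigenvectorUnitary.1) *
      diagonal ((↑) ∘ (√·) ∘ hA.1.eigenvalues))) * (star hA.1.eigenvectorUnitary : Matrix n n 𝕜) := by
        simp only [Matrix.mul_assoc]
    _ = _ := by rw [hU, Matrix.mul_one, hDD]

lemma outer_smul (c : ℂ) (φ : Fin 2 × Fin 2 → ℂ) :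
    outer (c • φ) = ((Complex.normSq c : ℝ) : ℂ) • outer φ := by
  ext i j
  simp only [outer, vecMulVec_apply, Pi.smul_apply, Pi.star_apply, smul_eq_mul,
    Matrix.smul_apply, star_mul', RingHom.id_apply]
  rw [← Complex.mul_conj]
  ring_nf
  rw [Complex.star_def]
  ring

lemma act2_one_apply (A : Matrix (Fin 2) (Fin 2) ℂ) (ψ : Fin 2 × Fin 2 → ℂ)
    (i j : Fin 2) :
    act2 A 1 ψ (i, j) = A i 0 * ψ (0, j) + A i 1 * ψ (1, j) := by
  fin_cases j <;> simp [act2, Fin.sum_univ_two, Matrix.one_apply]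

section Main
variable (M : Matrix (Fin 2 × Fin 2) (Fin 2 × Fin 2) ℂ → ℝ)
    (hhom : ∀ (c : ℝ), 0 ≤ c → ∀ ψ : Fin 2 × Fin 2 → ℂ,
      M ((c : ℂ) • outer ψ) = c * M (outer ψ))
    (hinv : ∀ (A B : Matrix (Fin 2) (Fin 2) ℂ), A.det = 1 → B.det = 1 →
      ∀ ψ : Fin 2 × Fin 2 → ℂ, M (outer (act2 A B ψ)) = M (outer ψ))

include hhom hinv in
lemma M_prod (u v : Fin 2 → ℂ) : M (outer (fun x => u x.1 * v x.2)) = 0 := by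
  have key : ∀ w : Fin 2 → ℂ,
      M (outer (fun x => (if x.1 = 0 then 1 else 0) * w x.2)) = 0 := by
    intro w
    set φ : Fin 2 × Fin 2 → ℂ := fun x => (if x.1 = 0 then 1 else 0) * w x.2 with hφ
    have hD : M (outer (act2 (Matrix.of ![![2, 0], ![0, (2:ℂ)⁻¹]]) 1 φ)) = M (outer φ) :=
      hinv _ 1 (by norm_num [Matrix.det_fin_two]) (by simp) φ
    have hact : act2 (Matrix.of ![![2, 0], ![0, (2:ℂ)⁻¹]]) 1 φ = (2:ℂ) • φ := by
      funext x
      obtain ⟨i, j⟩ := x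
      fin_cases i <;> fin_cases j <;>
        simp [act2, hφ, Fin.sum_univ_two, Matrix.one_apply]
    rw [hact, outer_smul] at hD
    have h4 : Complex.normSq (2:ℂ) = (4:ℝ) := by
      simp [Complex.normSq]; norm_num
    rw [h4, hhom 4 (by norm_num)] at hD
    linarith
  by_cases hu0 : u 0 ≠ 0
  · set S : Matrix (Fin 2) (Fin 2) ℂ := Matrix.of ![![u 0, 0], ![u 1, (u 0)⁻¹]] with hS
    have hdet : S.det = 1 := by
      rw [hS, Matrix.det_fin_two]
      simp
      field_simp
    have hact : act2 S 1 (fun x => (if x.1 = 0 then 1 else 0) * v x.2)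
        = fun x => u x.1 * v x.2 := by
      funext x
      obtain ⟨i, j⟩ := x
      fin_cases i <;> fin_cases j <;>
        simp [act2, hS, Fin.sum_univ_two, Matrix.one_apply]
    have := hinv S 1 hdet (by simp) (fun x => (if x.1 = 0 then 1 else 0) * v x.2)
    rw [hact] at this
    rw [this, key]
  · push_neg at hu0
    by_cases hu1 : u 1 = 0
    · have hz : (fun x : Fin 2 × Fin 2 => u x.1 * v x.2) =
          (2:ℂ) • fun x : Fin 2 × Fin 2 => u x.1 * v x.2 := by
        funext x
        obtain ⟨i, j⟩ := x
        fin_cases i <;> fin_cases j <;> simp [hu0, hu1]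
      have h4 : Complex.normSq (2:ℂ) = (4:ℝ) := by
        simp [Complex.normSq]; norm_num
      have h1 : M (outer fun x : Fin 2 × Fin 2 => u x.1 * v x.2)
          = 4 * M (outer fun x : Fin 2 × Fin 2 => u x.1 * v x.2) := by
        conv_lhs => rw [hz]
        rw [outer_smul, h4, hhom 4 (by norm_num)]
      linarith
    · set S : Matrix (Fin 2) (Fin 2) ℂ := Matrix.of ![![0, -(u 1)⁻¹], ![u 1, 0]] with hS
      have hdet : S.det = 1 := by
        rw [hS, Matrix.det_fin_two]
        simp
        field_simp
      have hact : act2 S 1 (fun x => (if x.1 = 0 then 1 else 0) * v x.2)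
          = fun x => u x.1 * v x.2 := by
        funext x
        obtain ⟨i, j⟩ := x
        fin_cases i <;> fin_cases j <;>
          simp [act2, hS, Fin.sum_univ_two, Matrix.one_apply, hu0]
      have := hinv S 1 hdet (by simp) (fun x => (if x.1 = 0 then 1 else 0) * v x.2)
      rw [hact] at this
      rw [this, key]

end Main

lemma funext2 {f g : Fin 2 × Fin 2 → ℂ} (h00 : f (0,0) = g (0,0))
    (h01 : f (0,1) = g (0,1)) (h10 : f (1,0) = g (1,0))
    (h11 : f (1,1) = g (1,1)) : f = g := by
  funext x
  obtain ⟨i, j⟩ := x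
  fin_cases i <;> fin_cases j
  · exact h00
  · exact h01
  · exact h10
  · exact h11

section Main2
variable (M : Matrix (Fin 2 × Fin 2) (Fin 2 × Fin 2) ℂ → ℝ)
    (hhom : ∀ (c : ℝ), 0 ≤ c → ∀ ψ : Fin 2 × Fin 2 → ℂ,
      M ((c : ℂ) • outer ψ) = c * M (outer ψ))
    (hinv : ∀ (A B : Matrix (Fin 2) (Fin 2) ℂ), A.det = 1 → B.det = 1 →
      ∀ ψ : Fin 2 × Fin 2 → ℂ, M (outer (act2 A B ψ)) = M (outer ψ))

include hhom hinv in
lemma M_degenerate (ψ : Fin 2 × Fin 2 → ℂ)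
    (hd : ψ (0,0) * ψ (1,1) = ψ (0,1) * ψ (1,0)) : M (outer ψ) = 0 := by
  obtain ⟨u, v, huv⟩ : ∃ u v : Fin 2 → ℂ, ψ = fun x => u x.1 * v x.2 := by
    by_cases h00 : ψ (0,0) ≠ 0
    · refine ⟨![ψ (0,0), ψ (1,0)], ![1, ψ (0,1) / ψ (0,0)], ?_⟩
      apply funext2
      · show ψ (0,0) = ψ (0,0) * 1; ring
      · show ψ (0,1) = ψ (0,0) * (ψ (0,1) / ψ (0,0))
        rw [mul_comm, div_mul_cancel₀ _ h00]
      · show ψ (1,0) = ψ (1,0) * 1; ring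
      · show ψ (1,1) = ψ (1,0) * (ψ (0,1) / ψ (0,0))
        rw [← mul_div_assoc, eq_div_iff h00]
        linear_combination hd
    · push_neg at h00
      by_cases h01 : ψ (0,1) = 0
      · refine ⟨![0, 1], ![ψ (1,0), ψ (1,1)], ?_⟩
        apply funext2
        · show ψ (0,0) = 0 * ψ (1,0); rw [h00]; ring
        · show ψ (0,1) = 0 * ψ (1,1); rw [h01]; ring
        · show ψ (1,0) = 1 * ψ (1,0); ring
        · show ψ (1,1) = 1 * ψ (1,1); ring
      · have h10 : ψ (1,0) = 0 := by
          rw [h00, zero_mul] at hd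
          rcases mul_eq_zero.mp hd.symm with hh | hh
          · exact absurd hh h01
          · exact hh
        refine ⟨![ψ (0,1), ψ (1,1)], ![0, 1], ?_⟩
        apply funext2
        · show ψ (0,0) = ψ (0,1) * 0; rw [h00]; ring
        · show ψ (0,1) = ψ (0,1) * 1; ring
        · show ψ (1,0) = ψ (1,1) * 0; rw [h10]; ring
        · show ψ (1,1) = ψ (1,1) * 1; ring
  rw [huv]
  exact M_prod M hhom hinv u v

include hhom hinv in
lemma M_act (A : Matrix (Fin 2) (Fin 2) ℂ) (ψ : Fin 2 × Fin 2 → ℂ) :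
    M (outer (act2 A 1 ψ)) = ‖A.det‖ * M (outer ψ) := by
  by_cases hdet : A.det = 0
  · rw [hdet]
    simp only [norm_zero, zero_mul]
    apply M_degenerate M hhom hinv
    have hA : A 0 0 * A 1 1 - A 0 1 * A 1 0 = 0 := by
      rw [← Matrix.det_fin_two]; exact hdet
    rw [act2_one_apply, act2_one_apply, act2_one_apply, act2_one_apply]
    linear_combination (ψ (0,0) * ψ (1,1) - ψ (0,1) * ψ (1,0)) * hA
  · obtain ⟨c, hc⟩ := IsAlgClosed.exists_pow_nat_eq A.det (n := 2) (by norm_num)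
    have hc0 : c ≠ 0 := by
      intro hcc; rw [hcc] at hc; simp at hc; exact hdet hc.symm
    set A' : Matrix (Fin 2) (Fin 2) ℂ := c⁻¹ • A with hA'
    have hdetA' : A'.det = 1 := by
      rw [hA', Matrix.det_smul, Fintype.card_fin, ← hc]
      field_simp
    have hAc' : ∀ i j : Fin 2, A i j = c * A' i j := by
      intro i j
      rw [hA', Matrix.smul_apply, smul_eq_mul, ← mul_assoc, mul_inv_cancel₀ hc0, one_mul]
    have hactsmul : act2 A 1 ψ = c • act2 A' 1 ψ := by
      apply funext2 <;>
        · rw [act2_one_apply, Pi.smul_apply, smul_eq_mul, act2_one_apply, hAc', hAc']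
          ring
    rw [hactsmul, outer_smul, hhom _ (Complex.normSq_nonneg c),
      hinv A' 1 hdetA' (by simp) ψ]
    congr 1
    rw [← Complex.sq_norm, ← norm_pow, hc]

end Main2

lemma psd_diag_re_nonneg {R : Matrix (Fin 2) (Fin 2) ℂ} (hR : R.PosSemidef)
    (i : Fin 2) : 0 ≤ (R i i).re := by
  have h1 := hR.re_dotProduct_nonneg (Pi.single i 1)
  have h2 : dotProduct (star (Pi.single i 1 : Fin 2 → ℂ)) (R *ᵥ Pi.single i 1)
      = R i i := by
    fin_cases i <;>
      simp [dotProduct, mulVec, Pi.single_apply, Fin.sum_univ_two]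
  rw [h2] at h1
  exact h1

lemma herm_det_eq {R : Matrix (Fin 2) (Fin 2) ℂ} (hR : R.IsHermitian) :
    R.det = (((R 0 0).re * (R 1 1).re - Complex.normSq (R 1 0) : ℝ) : ℂ) := by
  have h00 : ((R 0 0).re : ℂ) = R 0 0 := by
    rw [← Complex.conj_eq_iff_re]; exact hR.apply 0 0
  have h11 : ((R 1 1).re : ℂ) = R 1 1 := by
    rw [← Complex.conj_eq_iff_re]; exact hR.apply 1 1
  have h10 : star (R 1 0) = R 0 1 := hR.apply 0 1
  rw [Matrix.det_fin_two, ← h00, ← h11, ← h10, Complex.star_def,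
    mul_comm ((starRingEnd ℂ) (R 1 0)) (R 1 0), Complex.mul_conj]
  push_cast
  simp [Complex.ofReal_re]

lemma abs_det_add_abs_det_sqrt_le_one (A₁ : Matrix (Fin 2) (Fin 2) ℂ)
    (h : (1 - A₁ᴴ * A₁).PosSemidef) :
    ‖A₁.det‖ + ‖h.sqrt.det‖ ≤ 1 := by
  set P : Matrix (Fin 2) (Fin 2) ℂ := A₁ᴴ * A₁ with hPdef
  have hP : P.PosSemidef := Matrix.posSemidef_conjTranspose_mul_self A₁
  set Q : Matrix (Fin 2) (Fin 2) ℂ := 1 - P with hQdef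
  have hB : h.sqrt.PosSemidef := h.posSemidef_sqrt
  have hBB : h.sqrt * h.sqrt = Q := h.sqrt_mul_self
  set p0 := (P 0 0).re; set p1 := (P 1 1).re
  set q0 := (Q 0 0).re; set q1 := (Q 1 1).re
  have hp0 : 0 ≤ p0 := psd_diag_re_nonneg hP 0
  have hp1 : 0 ≤ p1 := psd_diag_re_nonneg hP 1
  have hq0 : 0 ≤ q0 := psd_diag_re_nonneg h 0
  have hq1 : 0 ≤ q1 := psd_diag_re_nonneg h 1
  have hsum0 : q0 = 1 - p0 := by
    simp [hQdef, q0, p0, Matrix.sub_apply, Matrix.one_apply]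
  have hsum1 : q1 = 1 - p1 := by
    simp [hQdef, q1, p1, Matrix.sub_apply, Matrix.one_apply]
  -- det P in two ways
  have hdP : P.det = ((Complex.normSq A₁.det : ℝ) : ℂ) := by
    rw [hPdef, Matrix.det_mul, Matrix.det_conjTranspose, Complex.star_def,
      mul_comm, Complex.mul_conj]
  have hdP2 := herm_det_eq hP.1
  have hPeq : Complex.normSq A₁.det = p0 * p1 - Complex.normSq (P 1 0) := by
    have := hdP.symm.trans hdP2
    exact_mod_cast this
  -- det Q
  have hdB : h.sqrt.det = (((h.sqrt.det).re : ℝ) : ℂ) := by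
    have := herm_det_eq hB.1
    rw [this]
    norm_num
  have hdQ2 := herm_det_eq h.1
  have hQeq : (h.sqrt.det).re ^ 2 = q0 * q1 - Complex.normSq (Q 1 0) := by
    have h1 : h.sqrt.det * h.sqrt.det = Q.det := by
      rw [← Matrix.det_mul]
      exact congrArg Matrix.det hBB
    have h2 : (((h.sqrt.det).re ^ 2 : ℝ) : ℂ) = Q.det := by
      rw [← h1]
      push_cast
      rw [← hdB]
      ring
    have := h2.trans hdQ2
    exact_mod_cast this
  -- bounds
  have ha : ‖A₁.det‖ ≤ (p0 + p1) / 2 := by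
    have h1 : ‖A₁.det‖ ^ 2 = Complex.normSq A₁.det := Complex.sq_norm _
    nlinarith [norm_nonneg A₁.det, Complex.normSq_nonneg (P 1 0),
      sq_nonneg (p0 - p1), sq_nonneg (‖A₁.det‖ - (p0 + p1) / 2)]
  have hb : ‖h.sqrt.det‖ ≤ (q0 + q1) / 2 := by
    have h1 : ‖h.sqrt.det‖ ^ 2 = (h.sqrt.det).re ^ 2 := by
      conv_lhs => rw [hdB]
      rw [Complex.norm_real, Real.norm_eq_abs, sq_abs]
    nlinarith [norm_nonneg h.sqrt.det, Complex.normSq_nonneg (Q 1 0),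
      sq_nonneg (q0 - q1), sq_nonneg (‖h.sqrt.det‖ - (q0 + q1) / 2)]
  calc ‖A₁.det‖ + ‖h.sqrt.det‖
      ≤ (p0 + p1) / 2 + (q0 + q1) / 2 := add_le_add ha hb
    _ = 1 := by rw [hsum0, hsum1]; ring

/-- if `M` is nonnegative, linearly homogeneous in `|ψ⟩⟨ψ|` and
invariant under determinant-1 local operations, then for any invertible `A₁` with
`A₁†A₁ ≤ I` and `Ā₁ = √(I − A₁†A₁)`:
`M(|ψ⟩⟨ψ|) ≥ M((A₁⊗I)|ψ⟩⟨ψ|(A₁⊗I)†) + M((Ā₁⊗I)|ψ⟩⟨ψ|(Ā₁⊗I)†)`. -/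
theorem monotone_under_local_measurement
    (M : Matrix (Fin 2 × Fin 2) (Fin 2 × Fin 2) ℂ → ℝ)
    (hpos : ∀ ψ : Fin 2 × Fin 2 → ℂ, 0 ≤ M (outer ψ))
    (hhom : ∀ (c : ℝ), 0 ≤ c → ∀ ψ : Fin 2 × Fin 2 → ℂ,
      M ((c : ℂ) • outer ψ) = c * M (outer ψ))
    (hinv : ∀ (A B : Matrix (Fin 2) (Fin 2) ℂ), A.det = 1 → B.det = 1 →
      ∀ ψ : Fin 2 × Fin 2 → ℂ, M (outer (act2 A B ψ)) = M (outer ψ))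
    (ψ : Fin 2 × Fin 2 → ℂ)
    (A₁ : Matrix (Fin 2) (Fin 2) ℂ) (hA₁ : IsUnit A₁.det)
    (h : (1 - A₁ᴴ * A₁).PosSemidef) :
    M (outer (act2 A₁ 1 ψ)) + M (outer (act2 (Matrix.PosSemidef.sqrt h) 1 ψ)) ≤ M (outer ψ) := by
  rw [M_act M hhom hinv A₁ ψ, M_act M hhom hinv h.sqrt ψ]
  have hkey := abs_det_add_abs_det_sqrt_le_one A₁ h
  have hM := hpos ψ
  nlinarith [mul_nonneg (norm_nonneg A₁.det) hM,
    mul_nonneg (norm_nonneg h.sqrt.det) hM,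
    mul_le_of_le_one_left hM (le_refl (1:ℝ))]
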